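/- arXiv:1903.00330 — 4 statements merged into one kernel-verified Lean document; each statement's English description precedes it below -/
import Mathlib

section
/- For a Randers metric F with navigation data (h, W), ‖W‖_h < 1, the dual (co-)metric of F on the cotangent space is F*(ξ) = √(h^{ij} ξ_i ξ_j) + w^i ξ_i, i.e. F* = h* + ⟨W, ·⟩ evaluated on covectors. -/
/-!
STATEMENT 1: For a Randers metric `F` with navigation data `(h, W)`, `‖W‖_h < 1`,
the dual metric on the cotangent space satisfies `F*(ξ) = h*(ξ) + ξ(W)`.
We model a tangent space as a finite dimensional real inner product space `(V, h)`;
a covector `ξ` is represented via Riesz duality by the vector `u` (so that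
`ξ(y) = ⟪u, y⟫`, `h*(ξ) = ‖u‖` and `ξ(W) = ⟪u, W⟫`).  The dual norm is
`F*(ξ) = sup { ξ(y) : F(y) = 1 }`.
-/

open scoped RealInnerProductSpace

theorem stmt1 (V : Type*) [NormedAddCommGroup V] [InnerProductSpace ℝ V]
    [FiniteDimensional ℝ V] [Nontrivial V]
    (W : V) (hW : ‖W‖ < 1) (lam : ℝ) (hlam : lam = 1 - ‖W‖ ^ 2)
    (F : V → ℝ)
    (hF : ∀ y, F y = (Real.sqrt (lam * ⟪y, y⟫ + ⟪W, y⟫ ^ 2) - ⟪W, y⟫) / lam)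
    (u : V) :
    sSup {r : ℝ | ∃ y : V, F y = 1 ∧ r = ⟪u, y⟫} = ‖u‖ + ⟪u, W⟫ := by
  have hWnn : (0:ℝ) ≤ ‖W‖ := norm_nonneg W
  have hlampos : 0 < lam := by nlinarith
  have hlamne : lam ≠ 0 := ne_of_gt hlampos
  -- F y = 1 iff y lies on the unit h-sphere centered at W
  have key : ∀ y : V, F y = 1 ↔ ‖y - W‖ = 1 := by
    intro y
    have hyy : ⟪y, y⟫ = ‖y‖ ^ 2 := real_inner_self_eq_norm_sq y
    have hWW : ⟪W, W⟫ = ‖W‖ ^ 2 := real_inner_self_eq_norm_sq W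
    have hns : ‖y - W‖ ^ 2 = ‖y‖ ^ 2 - 2 * ⟪W, y⟫ + ‖W‖ ^ 2 := by
      rw [@norm_sub_sq_real V, real_inner_comm]
    have hA : 0 ≤ lam * ⟪y, y⟫ + ⟪W, y⟫ ^ 2 := by nlinarith [sq_nonneg (⟪W, y⟫ : ℝ)]
    constructor
    · intro h1
      rw [hF y] at h1
      have hs : Real.sqrt (lam * ⟪y, y⟫ + ⟪W, y⟫ ^ 2) = lam + ⟪W, y⟫ := by
        field_simp at h1; linarith
      have hsq : lam * ⟪y, y⟫ + ⟪W, y⟫ ^ 2 = (lam + ⟪W, y⟫) ^ 2 := by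
        rw [← hs, Real.sq_sqrt hA]
      have h2 : ‖y - W‖ ^ 2 = 1 := by nlinarith
      have : ‖y - W‖ = Real.sqrt (‖y - W‖ ^ 2) := (Real.sqrt_sq (norm_nonneg _)).symm
      rw [this, h2, Real.sqrt_one]
    · intro h1
      have hy2 : ‖y‖ ^ 2 = lam + 2 * ⟪W, y⟫ := by nlinarith
      have hbge : ⟪W, y⟫ ≥ ‖W‖ ^ 2 - ‖W‖ := by
        have h2 : ⟪W, y - W⟫ = ⟪W, y⟫ - ⟪W, W⟫ := inner_sub_right W y W
        have h3 := abs_real_inner_le_norm W (y - W)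
        have h4 : -(‖W‖ * ‖y - W‖) ≤ ⟪W, y - W⟫ := neg_le_of_abs_le h3
        rw [h1] at h4
        nlinarith
      have hpos : 0 < lam + ⟪W, y⟫ := by nlinarith
      have hsq : lam * ⟪y, y⟫ + ⟪W, y⟫ ^ 2 = (lam + ⟪W, y⟫) ^ 2 := by nlinarith
      rw [hF y, hsq, Real.sqrt_sq hpos.le]
      field_simp
      ring
  -- the supremum over the sphere
  have hgreat : IsGreatest {r : ℝ | ∃ y : V, F y = 1 ∧ r = ⟪u, y⟫} (‖u‖ + ⟪u, W⟫) := by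
    constructor
    · -- membership: pick a maximizing point
      rcases eq_or_ne u 0 with hu | hu
      · obtain ⟨x, hx⟩ := exists_ne (0 : V)
        refine ⟨W + ‖x‖⁻¹ • x, ?_, ?_⟩
        · rw [key]
          simp [norm_smul, abs_of_nonneg (inv_nonneg.2 (norm_nonneg x)),
            inv_mul_cancel₀ (norm_ne_zero_iff.2 hx)]
        · simp [hu]
      · refine ⟨W + ‖u‖⁻¹ • u, ?_, ?_⟩
        · rw [key]
          simp [norm_smul, abs_of_nonneg (inv_nonneg.2 (norm_nonneg u)),
            inv_mul_cancel₀ (norm_ne_zero_iff.2 hu)]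
        · rw [inner_add_right, real_inner_smul_right, real_inner_self_eq_norm_sq]
          have hun : ‖u‖ ≠ 0 := norm_ne_zero_iff.2 hu
          field_simp [real_inner_comm]
          ring
    · rintro r ⟨y, hy1, rfl⟩
      rw [key] at hy1
      have h2 : ⟪u, y⟫ = ⟪u, W⟫ + ⟪u, y - W⟫ := by
        rw [inner_sub_right]; ring
      have h3 := real_inner_le_norm u (y - W)
      rw [hy1, mul_one] at h3
      linarith
  exact hgreat.csSup_eq
end

section
/- Let F be a Randers norm with navigation data (h,W), ‖W‖_h < 1. If n satisfies F(n) = 1 and ν = L(n) is its Legendre dual covector, then n = n̄ + W, where n̄ is the h-unit vector h-dual to ν/h*(ν); in particular n̄ has h-norm 1. -/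
/-!
STATEMENT 2: Let `F` be a Randers norm with navigation data `(h, W)`, `‖W‖_h < 1`.
If `F(n) = 1` and `ν = L(n)` is its Legendre dual covector
(`L(y) = F(y)·dF_y`, equivalently `L(y) = d(F²/2)_y`), then `n = n̄ + W`, where
`n̄` is the `h`-unit vector `h`-dual to `ν / h*(ν)`; in particular `‖n̄‖_h = 1`.
We model the tangent space as a finite dimensional real inner product space and
realize covectors through the Riesz representation (`InnerProductSpace.toDual`).
-/

open scoped RealInnerProductSpace

set_option maxHeartbeats 2000000 in
theorem stmt2 (V : Type*) [NormedAddCommGroup V] [InnerProductSpace ℝ V]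
    [FiniteDimensional ℝ V] [CompleteSpace V]
    (W : V) (hW : ‖W‖ < 1) (lam : ℝ) (hlam : lam = 1 - ‖W‖ ^ 2)
    (F : V → ℝ)
    (hF : ∀ y, F y = (Real.sqrt (lam * ⟪y, y⟫ + ⟪W, y⟫ ^ 2) - ⟪W, y⟫) / lam)
    (n : V) (hn : F n = 1)
    -- `ν = L(n) = F(n) • dF_n` is the Legendre transform of `n`
    (ν : V →L[ℝ] ℝ) (hν : ν = F n • fderiv ℝ F n)
    -- `u` is the `h`-dual (Riesz) vector of `ν`, so `n̄ = u / h*(ν) = u / ‖u‖`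
    (u : V) (hu : u = (InnerProductSpace.toDual ℝ V).symm ν)
    (nbar : V) (hnbar : nbar = ‖u‖⁻¹ • u) :
    n = nbar + W ∧ ‖nbar‖ = 1 := by
  have hWnn : (0:ℝ) ≤ ‖W‖ := norm_nonneg W
  have hlampos : 0 < lam := by
    rw [hlam]; nlinarith
  set c : ℝ := ⟪W, n⟫ with hc
  set S : ℝ := lam * ⟪n, n⟫ + c ^ 2 with hS
  clear_value c S
  -- n ≠ 0
  have hn0 : n ≠ 0 := by
    intro h
    rw [hF, h] at hn
    simp at hn
  have hnn : 0 < ⟪n, n⟫ := by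
    rw [real_inner_self_eq_norm_sq]
    have : 0 < ‖n‖ := norm_pos_iff.mpr hn0
    positivity
  have hSpos : 0 < S := by
    have : 0 ≤ c ^ 2 := sq_nonneg c
    nlinarith
  -- from F n = 1 : sqrt S = lam + c
  have hsqrt : Real.sqrt S = lam + c := by
    have := hn
    rw [hF] at this
    field_simp at this
    rw [← hc, ← hS] at this
    linarith
  have hlc : 0 < lam + c := by
    rw [← hsqrt]; exact Real.sqrt_pos.mpr hSpos
  have hSsq : S = (lam + c) ^ 2 := by
    rw [← hsqrt, Real.sq_sqrt hSpos.le]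
  have hinn : ⟪n, n⟫ = lam + 2 * c := by
    have h := hSsq
    rw [hS] at h
    nlinarith
  -- ‖n - W‖ = 1
  have hnW2 : ⟪n - W, n - W⟫ = 1 := by
    have hWW : ⟪W, W⟫ = ‖W‖ ^ 2 := real_inner_self_eq_norm_sq W
    have h1 : ⟪n, W⟫ = c := (real_inner_comm W n).trans hc.symm
    rw [real_inner_sub_sub_self, h1, hWW, hinn, hlam]; ring
  have hnWnorm : ‖n - W‖ = 1 := by
    have h2 : ‖n - W‖ ^ 2 = 1 := by rw [← real_inner_self_eq_norm_sq]; exact hnW2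
    rw [← Real.sqrt_sq (norm_nonneg (n - W)), h2, Real.sqrt_one]
  -- derivative of F at n
  have hDq : HasFDerivAt (fun y : V => ⟪y, y⟫) ((2:ℝ) • (innerSL ℝ n)) n := by
    refine ((hasFDerivAt_id n).inner ℝ (hasFDerivAt_id n)).congr_fderiv ?_
    ext v
    simp [fderivInnerCLM, real_inner_comm, two_smul]
  have hDW : HasFDerivAt (fun y : V => ⟪W, y⟫) (innerSL ℝ W) n := (innerSL ℝ W).hasFDerivAt
  have hDS : HasFDerivAt (fun y : V => lam * ⟪y, y⟫ + ⟪W, y⟫ ^ 2)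
      ((2 * lam) • (innerSL ℝ n) + (2 * c) • (innerSL ℝ W)) n := by
    have h1 := hDq.const_mul lam
    have h2 : HasFDerivAt (fun y : V => ⟪W, y⟫ ^ 2) ((2 * c) • (innerSL ℝ W)) n := by
      have hmul := hDW.mul hDW
      have hfe : (fun y : V => ⟪W, y⟫ ^ 2) = fun y : V => ⟪W, y⟫ * ⟪W, y⟫ := by
        funext y; ring
      rw [hfe]
      refine hmul.congr_fderiv ?_
      ext v
      simp [← hc]
      ring
    have := h1.add h2
    refine this.congr_fderiv ?_
    ext v
    simp
    ring
  have hDsqrt : HasFDerivAt (fun y : V => Real.sqrt (lam * ⟪y, y⟫ + ⟪W, y⟫ ^ 2))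
      ((1 / (2 * (lam + c))) • ((2 * lam) • (innerSL ℝ n) + (2 * c) • (innerSL ℝ W))) n := by
    have hSval : lam * ⟪n, n⟫ + ⟪W, n⟫ ^ 2 = S := by rw [hS, hc]
    have hroot : HasDerivAt Real.sqrt (1 / (2 * Real.sqrt S)) S :=
      Real.hasDerivAt_sqrt hSpos.ne'
    rw [hsqrt, ← hSval] at hroot
    have := hroot.comp_hasFDerivAt n hDS
    refine this.congr_fderiv ?_
    ext v
    simp [ContinuousLinearMap.smul_apply]
  have hDF : HasFDerivAt F ((lam + c)⁻¹ • (innerSL ℝ (n - W))) n := by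
    have h := (hDsqrt.sub hDW).const_mul lam⁻¹
    have hfun : F = fun y => lam⁻¹ * (Real.sqrt (lam * ⟪y, y⟫ + ⟪W, y⟫ ^ 2) - ⟪W, y⟫) := by
      funext y; rw [hF y]; ring
    rw [hfun]
    refine h.congr_fderiv ?_
    ext v
    simp [inner_sub_left]
    field_simp
    ring
  have hfderiv : fderiv ℝ F n = (lam + c)⁻¹ • (innerSL ℝ (n - W)) := hDF.fderiv
  -- ν
  have hν' : ν = (lam + c)⁻¹ • (innerSL ℝ (n - W)) := by
    rw [hν, hn, hfderiv, one_smul]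
  -- u
  have hu' : u = (lam + c)⁻¹ • (n - W) := by
    rw [hu]
    apply (InnerProductSpace.toDual ℝ V).injective
    rw [LinearIsometryEquiv.apply_symm_apply, hν']
    ext v
    simp [InnerProductSpace.toDual_apply_apply, inner_smul_left]
  have hunorm : ‖u‖ = (lam + c)⁻¹ := by
    rw [hu', norm_smul, hnWnorm, mul_one, Real.norm_eq_abs,
      abs_of_pos (inv_pos.mpr hlc)]
  have hnbar' : nbar = n - W := by
    rw [hnbar, hunorm, hu', inv_inv, smul_smul, mul_inv_cancel₀ hlc.ne', one_smul]
  constructor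
  · rw [hnbar']; abel
  · rw [hnbar', hnWnorm]
end

section
/- Let M be a submanifold of a Randers manifold (N,F) with navigation data (h,W), and n a unit normal vector (F(n)=1, L(n)|_{TM}=0). Then the induced metric ĝ_n = φ*g_n on M is conformal to the induced Riemannian metric h̄ = φ*h, with ĝ_n = h̄ / (1 + ⟨n̄, W⟩_h), where n̄ = n - W is the h-unit normal. -/
/-!
STATEMENT 4: Let `M` be a submanifold of a Randers manifold `(N,F)` with navigation
data `(h,W)` and `n` an `F`-unit normal vector (`F(n) = 1`, `L(n)|_{TM} = 0`).
Then the induced metric `ĝ_n = φ*g_n` on `M` is conformal to the induced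
Riemannian metric `h̄ = φ*h`, namely `ĝ_n = h̄ / (1 + ⟨n̄, W⟩_h)` with `n̄ = n - W`.

Pointwise model: the tangent space of `N` is a real inner product space `(V, h)`,
the tangent space of `M` is a subspace `T ⊆ V`; the fundamental tensor
`g_n(X,Y) = ½ [F²]_{y^i y^j}(n) X^i Y^j` is the second derivative of `F²/2` at `n`,
and the normality condition `L(n)(X) = 0` reads `d(F²/2)_n(X) = 0` for `X ∈ T`.
-/

open scoped RealInnerProductSpace

set_option maxHeartbeats 1000000 in
theorem stmt4 (V : Type*) [NormedAddCommGroup V] [InnerProductSpace ℝ V]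
    (W : V) (hW : ‖W‖ < 1) (lam : ℝ) (hlam : lam = 1 - ‖W‖ ^ 2)
    (F : V → ℝ)
    (hF : ∀ y, F y = (Real.sqrt (lam * ⟪y, y⟫ + ⟪W, y⟫ ^ 2) - ⟪W, y⟫) / lam)
    -- fundamental tensor of `F` with reference vector `y`
    (g : V → V → V → ℝ)
    (hg : ∀ y X Y, g y X Y =
      fderiv ℝ (fun z => fderiv ℝ (fun v => F v ^ 2 / 2) z Y) y X)
    -- tangent space of the submanifold
    (T : Submodule ℝ V)
    -- `F`-unit normal vector
    (n : V) (hn : F n = 1)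
    (hnormal : ∀ X ∈ T, fderiv ℝ (fun v => F v ^ 2 / 2) n X = 0)
    (nbar : V) (hnbar : nbar = n - W) :
    ∀ X ∈ T, ∀ Y ∈ T, g n X Y = ⟪X, Y⟫ / (1 + ⟪nbar, W⟫) := by
  have hlam0 : 0 < lam := by
    rw [hlam]; nlinarith [norm_nonneg W]
  have hlamne : lam ≠ 0 := ne_of_gt hlam0
  -- rewrite the abstract `F` into the explicit navigation-data form
  have hFun : (fun v => F v ^ 2 / 2)
      = (fun v : V => (Real.sqrt (lam * ⟪v, v⟫ + ⟪W, v⟫ * ⟪W, v⟫) - ⟪W, v⟫) * lam⁻¹ *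
          ((Real.sqrt (lam * ⟪v, v⟫ + ⟪W, v⟫ * ⟪W, v⟫) - ⟪W, v⟫) * lam⁻¹) * 2⁻¹) := by
    funext v
    rw [hF v, pow_two ⟪W, v⟫]
    ring
  -- basic facts about the point `n`
  have hqn : (0:ℝ) ≤ ⟪n, n⟫ := real_inner_self_nonneg
  have hAnn : (0:ℝ) ≤ lam * ⟪n, n⟫ + ⟪W, n⟫ * ⟪W, n⟫ := by nlinarith [mul_self_nonneg ⟪W, n⟫]
  have hn1 : (Real.sqrt (lam * ⟪n, n⟫ + ⟪W, n⟫ ^ 2) - ⟪W, n⟫) / lam = 1 := by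
    rw [← hF n]; exact hn
  have hsn : Real.sqrt (lam * ⟪n, n⟫ + ⟪W, n⟫ * ⟪W, n⟫) = lam + ⟪W, n⟫ := by
    rw [show lam * ⟪n, n⟫ + ⟪W, n⟫ * ⟪W, n⟫ = lam * ⟪n, n⟫ + ⟪W, n⟫ ^ 2 by ring]
    field_simp at hn1
    linarith
  have hσ0 : (0:ℝ) ≤ lam + ⟪W, n⟫ := hsn ▸ Real.sqrt_nonneg _
  have hσ : (0:ℝ) < lam + ⟪W, n⟫ := by
    rcases lt_or_eq_of_le hσ0 with h | h
    · exact h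
    · exfalso
      have h0 : Real.sqrt (lam * ⟪n, n⟫ + ⟪W, n⟫ * ⟪W, n⟫) = 0 := by rw [hsn, ← h]
      have hA0 : lam * ⟪n, n⟫ + ⟪W, n⟫ * ⟪W, n⟫ = 0 := by
        have := Real.sqrt_eq_zero hAnn |>.mp h0
        exact this
      nlinarith [mul_self_nonneg ⟪W, n⟫]
  have hσne : lam + ⟪W, n⟫ ≠ 0 := ne_of_gt hσ
  have hAn : (0:ℝ) < lam * ⟪n, n⟫ + ⟪W, n⟫ * ⟪W, n⟫ := by
    have := Real.sq_sqrt hAnn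
    rw [hsn] at this
    nlinarith [mul_pos hσ hσ]
  -- the first derivative of the explicit `F²/2`
  have key : ∀ (Z z : V), 0 < lam * ⟪z, z⟫ + ⟪W, z⟫ * ⟪W, z⟫ →
      fderiv ℝ (fun v : V => (Real.sqrt (lam * ⟪v, v⟫ + ⟪W, v⟫ * ⟪W, v⟫) - ⟪W, v⟫) * lam⁻¹ *
          ((Real.sqrt (lam * ⟪v, v⟫ + ⟪W, v⟫ * ⟪W, v⟫) - ⟪W, v⟫) * lam⁻¹) * 2⁻¹) z Z
        = (Real.sqrt (lam * ⟪z, z⟫ + ⟪W, z⟫ * ⟪W, z⟫) - ⟪W, z⟫) *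
            ((lam * ⟪Z, z⟫ + ⟪W, z⟫ * ⟪W, Z⟫) *
              (Real.sqrt (lam * ⟪z, z⟫ + ⟪W, z⟫ * ⟪W, z⟫))⁻¹ - ⟪W, Z⟫) * (lam * lam)⁻¹ := by
    intro Z z hz
    have hsz : Real.sqrt (lam * ⟪z, z⟫ + ⟪W, z⟫ * ⟪W, z⟫) ≠ 0 :=
      ne_of_gt (Real.sqrt_pos.mpr hz)
    have hb : HasFDerivAt (fun t : V => ⟪W, t⟫) _ z :=
      (hasFDerivAt_const W z).inner ℝ (hasFDerivAt_id z)
    have hq : HasFDerivAt (fun t : V => ⟪t, t⟫) _ z :=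
      (hasFDerivAt_id z).inner ℝ (hasFDerivAt_id z)
    have hA : HasFDerivAt (fun v : V => lam * ⟪v, v⟫ + ⟪W, v⟫ * ⟪W, v⟫) _ z :=
      (hq.const_mul lam).add (hb.mul hb)
    have hs := hA.sqrt (ne_of_gt hz)
    have hf : HasFDerivAt
        (fun v : V => (Real.sqrt (lam * ⟪v, v⟫ + ⟪W, v⟫ * ⟪W, v⟫) - ⟪W, v⟫) * lam⁻¹) _ z :=
      (hs.sub hb).mul_const lam⁻¹
    have hG := (hf.mul hf).mul_const (2:ℝ)⁻¹
    have hG' : HasFDerivAt (fun v : V => (Real.sqrt (lam * ⟪v, v⟫ + ⟪W, v⟫ * ⟪W, v⟫) - ⟪W, v⟫) * lam⁻¹ *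
        ((Real.sqrt (lam * ⟪v, v⟫ + ⟪W, v⟫ * ⟪W, v⟫) - ⟪W, v⟫) * lam⁻¹) * 2⁻¹) _ z := hG
    rw [hG'.fderiv]
    simp [fderivInnerCLM_apply, real_inner_comm z Z]
    field_simp
    ring
  -- normality, in explicit form
  rw [hFun] at hnormal
  have hperp : ∀ Z ∈ T, (⟪Z, n⟫ : ℝ) = ⟪W, Z⟫ := by
    intro Z hZ
    have h0 := hnormal Z hZ
    rw [key Z n hAn, hsn] at h0
    have e : lam * (⟪Z, n⟫ - ⟪W, Z⟫)
        = (lam + ⟪W, n⟫ - ⟪W, n⟫) *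
            ((lam * ⟪Z, n⟫ + ⟪W, n⟫ * ⟪W, Z⟫) * (lam + ⟪W, n⟫)⁻¹ - ⟪W, Z⟫) * (lam * lam)⁻¹ *
          (lam * (lam + ⟪W, n⟫)) := by
      field_simp
      ring
    rw [h0, zero_mul] at e
    have h2 := mul_eq_zero.mp e
    rcases h2 with h2 | h2
    · exact absurd h2 hlamne
    · linarith
  intro X hX Y hY
  have hXn : (⟪X, n⟫ : ℝ) = ⟪W, X⟫ := hperp X hX
  have hYn : (⟪Y, n⟫ : ℝ) = ⟪W, Y⟫ := hperp Y hY
  -- denominator identification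
  have hden : 1 + ⟪nbar, W⟫ = lam + ⟪W, n⟫ := by
    rw [hnbar, inner_sub_left, real_inner_comm n W, real_inner_self_eq_norm_sq]
    rw [hlam]; ring
  rw [hg, hFun, hden]
  -- eventual equality of the inner `fderiv` with the explicit formula
  have hcont : Continuous (fun z : V => lam * ⟪z, z⟫ + ⟪W, z⟫ * ⟪W, z⟫) := by
    exact (continuous_const.mul (continuous_id.inner continuous_id)).add
      ((continuous_const.inner continuous_id).mul (continuous_const.inner continuous_id))
  have hev : (fun z : V => fderiv ℝ
        (fun v : V => (Real.sqrt (lam * ⟪v, v⟫ + ⟪W, v⟫ * ⟪W, v⟫) - ⟪W, v⟫) * lam⁻¹ *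
          ((Real.sqrt (lam * ⟪v, v⟫ + ⟪W, v⟫ * ⟪W, v⟫) - ⟪W, v⟫) * lam⁻¹) * 2⁻¹) z Y)
      =ᶠ[nhds n] (fun z : V => (Real.sqrt (lam * ⟪z, z⟫ + ⟪W, z⟫ * ⟪W, z⟫) - ⟪W, z⟫) *
            ((lam * ⟪Y, z⟫ + ⟪W, z⟫ * ⟪W, Y⟫) *
              (Real.sqrt (lam * ⟪z, z⟫ + ⟪W, z⟫ * ⟪W, z⟫))⁻¹ - ⟪W, Y⟫) * (lam * lam)⁻¹) := by
    filter_upwards [(isOpen_lt continuous_const hcont).mem_nhds hAn] with z hz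
    exact key Y z hz
  rw [hev.fderiv_eq]
  -- second derivative computation at `n`
  have hsne : Real.sqrt (lam * ⟪n, n⟫ + ⟪W, n⟫ * ⟪W, n⟫) ≠ 0 :=
    ne_of_gt (Real.sqrt_pos.mpr hAn)
  have hb : HasFDerivAt (fun t : V => ⟪W, t⟫) _ n :=
    (hasFDerivAt_const W n).inner ℝ (hasFDerivAt_id n)
  have hq : HasFDerivAt (fun t : V => ⟪t, t⟫) _ n :=
    (hasFDerivAt_id n).inner ℝ (hasFDerivAt_id n)
  have hYd : HasFDerivAt (fun t : V => ⟪Y, t⟫) _ n :=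
    (hasFDerivAt_const Y n).inner ℝ (hasFDerivAt_id n)
  have hA : HasFDerivAt (fun v : V => lam * ⟪v, v⟫ + ⟪W, v⟫ * ⟪W, v⟫) _ n :=
    (hq.const_mul lam).add (hb.mul hb)
  have hs := hA.sqrt (ne_of_gt hAn)
  have hinv : HasFDerivAt
      (fun z : V => (Real.sqrt (lam * ⟪z, z⟫ + ⟪W, z⟫ * ⟪W, z⟫))⁻¹) _ n :=
    (hasDerivAt_inv hsne).comp_hasFDerivAt n hs
  have hD := ((hs.sub hb).mul
    ((((hYd.const_mul lam).add (hb.mul_const ⟪W, Y⟫)).mul hinv).sub_const ⟪W, Y⟫)).mul_const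
      (lam * lam)⁻¹
  have hXn' : (inner ℝ n X : ℝ) = inner ℝ W X := by rw [real_inner_comm]; exact hXn
  have hYn' : (inner ℝ n Y : ℝ) = inner ℝ W Y := by
    rw [real_inner_comm]; exact real_inner_comm Y n ▸ hYn
  have hD' : HasFDerivAt (fun z : V => (Real.sqrt (lam * ⟪z, z⟫ + ⟪W, z⟫ * ⟪W, z⟫) - ⟪W, z⟫) *
      ((lam * ⟪Y, z⟫ + ⟪W, z⟫ * ⟪W, Y⟫) *
        (Real.sqrt (lam * ⟪z, z⟫ + ⟪W, z⟫ * ⟪W, z⟫))⁻¹ - ⟪W, Y⟫) * (lam * lam)⁻¹) _ n := hD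
  rw [hD'.fderiv]
  simp only [ContinuousLinearMap.smul_apply, ContinuousLinearMap.add_apply,
    ContinuousLinearMap.sub_apply, ContinuousLinearMap.coe_comp', Function.comp_apply,
    ContinuousLinearMap.prod_apply, ContinuousLinearMap.id_apply,
    ContinuousLinearMap.zero_apply, fderivInnerCLM_apply, smul_eq_mul, id_eq,
    Pi.sub_apply, Pi.mul_apply, Pi.add_apply,
    inner_zero_left, inner_zero_right, hsn, hXn, hXn', real_inner_comm Y n ▸ hYn, hYn']
  rw [real_inner_comm Y X, show (⟪Y, n⟫ : ℝ) = ⟪W, Y⟫ from hYn]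
  field_simp
  ring
end

section
/- Restricted to vectors y of fixed F-norm F(y)=1, the fundamental tensor of a Randers metric with navigation data (h,W) satisfies g_{ij}(y) v^i v^j = (1/(λα(y)))·h_{ij} v^i v^j for all v with ⟨L(y), v⟩ = 0, i.e. g_y agrees with h/(λα(y)) on the g_y-orthogonal complement of y. -/
/-!
STATEMENT 5: For a Randers norm `F` with navigation data `(h,W)` and a vector `y`
with `F(y) = 1`, the fundamental tensor satisfies
`g_y(v,v) = h(v,v)/(λ α(y))` for every `v` with `⟨L(y), v⟩ = 0`,
i.e. `g_y` agrees with `h/(λα(y))` on the `g_y`-orthogonal complement of `y`.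
Here `α(y) = √(a(y,y))`, `a(y,y) = (λ h(y,y) + ⟨W,y⟩_h²)/λ²`, and the Legendre
condition `⟨L(y), v⟩ = 0` reads `d(F²/2)_y(v) = 0` (equivalently `g_y(y,v) = 0`).
-/

open scoped RealInnerProductSpace

section Stmt5Aux
variable {V : Type*} [NormedAddCommGroup V] [InnerProductSpace ℝ V]

lemma stmt5_sder0 (W z : V) (lam : ℝ) :
    HasFDerivAt (fun u : V => lam * ⟪u, u⟫ + ⟪W, u⟫ ^ 2)
      ((2 * lam) • innerSL ℝ z + (2 * ⟪W, z⟫) • innerSL ℝ W) z := by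
  have h3 : (fun u : V => lam * ⟪u, u⟫ + ⟪W, u⟫ ^ 2)
      = fun u : V => lam * ‖u‖ ^ 2 + (innerSL ℝ W) u * (innerSL ℝ W) u := by
    funext u; simp [real_inner_self_eq_norm_sq, sq]
  rw [h3]
  have hA := ((hasStrictFDerivAt_norm_sq z).hasFDerivAt.const_mul lam).add
    (((innerSL ℝ W).hasFDerivAt).mul ((innerSL ℝ W).hasFDerivAt))
  simp only [Pi.add_def, Pi.mul_def] at hA
  refine hA.congr_fderiv ?_
  ext u
  simp [two_smul]
  ring

lemma stmt5_sder (W z : V) (lam : ℝ) (hz : 0 < lam * ⟪z, z⟫ + ⟪W, z⟫ ^ 2) :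
    HasFDerivAt (fun u : V => Real.sqrt (lam * ⟪u, u⟫ + ⟪W, u⟫ ^ 2))
      ((1 / (2 * Real.sqrt (lam * ⟪z, z⟫ + ⟪W, z⟫ ^ 2))) •
        ((2 * lam) • innerSL ℝ z + (2 * ⟪W, z⟫) • innerSL ℝ W)) z :=
  (stmt5_sder0 W z lam).sqrt (ne_of_gt hz)

lemma stmt5_rbder (W z : V) (lam : ℝ) (hz : 0 < lam * ⟪z, z⟫ + ⟪W, z⟫ ^ 2) :
    HasFDerivAt (fun u : V => Real.sqrt (lam * ⟪u, u⟫ + ⟪W, u⟫ ^ 2) - ⟪W, u⟫)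
      ((1 / (2 * Real.sqrt (lam * ⟪z, z⟫ + ⟪W, z⟫ ^ 2))) •
        ((2 * lam) • innerSL ℝ z + (2 * ⟪W, z⟫) • innerSL ℝ W) - innerSL ℝ W) z :=
  (stmt5_sder W z lam hz).sub (innerSL ℝ W).hasFDerivAt

lemma stmt5_Eder (W z : V) (lam : ℝ) (hlam : lam ≠ 0)
    (hz : 0 < lam * ⟪z, z⟫ + ⟪W, z⟫ ^ 2) :
    HasFDerivAt (fun u : V => ((Real.sqrt (lam * ⟪u, u⟫ + ⟪W, u⟫ ^ 2) - ⟪W, u⟫) *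
        (Real.sqrt (lam * ⟪u, u⟫ + ⟪W, u⟫ ^ 2) - ⟪W, u⟫)) * (2 * lam ^ 2)⁻¹)
      ((((Real.sqrt (lam * ⟪z, z⟫ + ⟪W, z⟫ ^ 2) - ⟪W, z⟫) * lam⁻¹) * lam⁻¹) •
        ((1 / (2 * Real.sqrt (lam * ⟪z, z⟫ + ⟪W, z⟫ ^ 2))) •
            ((2 * lam) • innerSL ℝ z + (2 * ⟪W, z⟫) • innerSL ℝ W)
          - innerSL ℝ W)) z := by
  have hrb := stmt5_rbder W z lam hz
  have h := (hrb.mul hrb).mul_const ((2 * lam ^ 2)⁻¹)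
  simp only [Pi.add_def, Pi.mul_def] at h
  refine h.congr_fderiv ?_
  ext u
  simp
  field_simp
  ring

end Stmt5Aux

theorem stmt5 (V : Type*) [NormedAddCommGroup V] [InnerProductSpace ℝ V]
    (W : V) (hW : ‖W‖ < 1) (lam : ℝ) (hlam : lam = 1 - ‖W‖ ^ 2)
    (F : V → ℝ)
    (hF : ∀ z, F z = (Real.sqrt (lam * ⟪z, z⟫ + ⟪W, z⟫ ^ 2) - ⟪W, z⟫) / lam)
    (α : V → ℝ)
    (hα : ∀ z, α z = Real.sqrt ((lam * ⟪z, z⟫ + ⟪W, z⟫ ^ 2) / lam ^ 2))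
    -- fundamental tensor of `F` with reference vector `y`
    (g : V → V → V → ℝ)
    (hg : ∀ y X Y, g y X Y =
      fderiv ℝ (fun z => fderiv ℝ (fun u => F u ^ 2 / 2) z Y) y X)
    (y : V) (hy : F y = 1) :
    ∀ v : V, fderiv ℝ (fun u => F u ^ 2 / 2) y v = 0 →
      g y v v = ⟪v, v⟫ / (lam * α y) := by
  intro v hv
  have hlam0 : 0 < lam := by
    have h1 : ‖W‖ ^ 2 < 1 := by nlinarith [norm_nonneg W]
    rw [hlam]; linarith
  have hlamne : lam ≠ 0 := ne_of_gt hlam0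
  -- rewrite the energy
  have hE : (fun u : V => F u ^ 2 / 2)
      = fun u : V => ((Real.sqrt (lam * ⟪u, u⟫ + ⟪W, u⟫ ^ 2) - ⟪W, u⟫) *
          (Real.sqrt (lam * ⟪u, u⟫ + ⟪W, u⟫ ^ 2) - ⟪W, u⟫)) * (2 * lam ^ 2)⁻¹ := by
    funext u
    rw [hF u]
    field_simp
  rw [hg, hE]
  rw [hE] at hv
  -- basic facts about y
  have hsy0 : 0 ≤ lam * ⟪y, y⟫ + ⟪W, y⟫ ^ 2 := by
    have h1 := real_inner_self_nonneg (x := y)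
    nlinarith [sq_nonneg ⟪W, y⟫]
  have hkey0 : Real.sqrt (lam * ⟪y, y⟫ + ⟪W, y⟫ ^ 2) - ⟪W, y⟫ = lam := by
    have h := hF y
    rw [hy] at h
    field_simp at h
    linarith
  have hsy : 0 < lam * ⟪y, y⟫ + ⟪W, y⟫ ^ 2 := by
    rcases hsy0.lt_or_eq with h | h
    · exact h
    · exfalso
      have h2 : ⟪W, y⟫ ^ 2 = 0 := by
        nlinarith [real_inner_self_nonneg (x := y)]
      have h3 : ⟪W, y⟫ = 0 := by nlinarith
      rw [← h, Real.sqrt_zero, h3] at hkey0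
      simp at hkey0
      exact hlamne hkey0.symm
  have hR0 : 0 < Real.sqrt (lam * ⟪y, y⟫ + ⟪W, y⟫ ^ 2) := Real.sqrt_pos.2 hsy
  have hRne : Real.sqrt (lam * ⟪y, y⟫ + ⟪W, y⟫ ^ 2) ≠ 0 := ne_of_gt hR0
  -- the open set where things are smooth
  have hUopen : IsOpen {z : V | 0 < lam * ⟪z, z⟫ + ⟪W, z⟫ ^ 2} := by
    have hc : Continuous fun z : V => lam * ⟪z, z⟫ + ⟪W, z⟫ ^ 2 :=
      (continuous_const.mul (continuous_id.inner continuous_id)).add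
        ((continuous_const.inner continuous_id).pow 2)
    exact isOpen_lt continuous_const hc
  -- the first derivative as an explicit scalar function
  have hGev : (fun z : V => fderiv ℝ (fun u : V =>
        ((Real.sqrt (lam * ⟪u, u⟫ + ⟪W, u⟫ ^ 2) - ⟪W, u⟫) *
          (Real.sqrt (lam * ⟪u, u⟫ + ⟪W, u⟫ ^ 2) - ⟪W, u⟫)) * (2 * lam ^ 2)⁻¹) z v)
      =ᶠ[nhds y] fun z : V =>
        ((Real.sqrt (lam * ⟪z, z⟫ + ⟪W, z⟫ ^ 2) - ⟪W, z⟫) * lam⁻¹ * lam⁻¹) *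
        ((2 * Real.sqrt (lam * ⟪z, z⟫ + ⟪W, z⟫ ^ 2))⁻¹ *
            (2 * lam * ⟪v, z⟫ + 2 * (⟪W, z⟫ * ⟪W, v⟫)) - ⟪W, v⟫) := by
    filter_upwards [hUopen.mem_nhds hsy] with z hz
    rw [(stmt5_Eder W z lam hlamne hz).fderiv]
    simp only [ContinuousLinearMap.smul_apply, ContinuousLinearMap.add_apply,
      ContinuousLinearMap.sub_apply, ContinuousLinearMap.coe_smul', Pi.smul_apply,
      innerSL_apply_apply, smul_eq_mul, one_div]
    rw [real_inner_comm v z]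
    ring
  rw [hGev.fderiv_eq]
  -- the second derivative
  have hA : HasFDerivAt
      (fun z : V => (Real.sqrt (lam * ⟪z, z⟫ + ⟪W, z⟫ ^ 2) - ⟪W, z⟫) * lam⁻¹ * lam⁻¹)
      (lam⁻¹ • (lam⁻¹ •
        ((1 / (2 * Real.sqrt (lam * ⟪y, y⟫ + ⟪W, y⟫ ^ 2))) •
          ((2 * lam) • innerSL ℝ y + (2 * ⟪W, y⟫) • innerSL ℝ W) - innerSL ℝ W))) y :=
    ((stmt5_rbder W y lam hsy).mul_const lam⁻¹).mul_const lam⁻¹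
  have hrmul : HasFDerivAt (fun z : V => 2 * Real.sqrt (lam * ⟪z, z⟫ + ⟪W, z⟫ ^ 2))
      ((2 : ℝ) • ((1 / (2 * Real.sqrt (lam * ⟪y, y⟫ + ⟪W, y⟫ ^ 2))) •
        ((2 * lam) • innerSL ℝ y + (2 * ⟪W, y⟫) • innerSL ℝ W))) y :=
    (stmt5_sder W y lam hsy).const_mul 2
  have hinv : HasFDerivAt (fun z : V => (2 * Real.sqrt (lam * ⟪z, z⟫ + ⟪W, z⟫ ^ 2))⁻¹)
      ((-((2 * Real.sqrt (lam * ⟪y, y⟫ + ⟪W, y⟫ ^ 2)) ^ 2)⁻¹) •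
        ((2 : ℝ) • ((1 / (2 * Real.sqrt (lam * ⟪y, y⟫ + ⟪W, y⟫ ^ 2))) •
          ((2 * lam) • innerSL ℝ y + (2 * ⟪W, y⟫) • innerSL ℝ W)))) y :=
    (hasDerivAt_inv (by positivity)).comp_hasFDerivAt y hrmul
  have hp2 : HasFDerivAt (fun z : V => 2 * lam * ⟪v, z⟫ + 2 * (⟪W, z⟫ * ⟪W, v⟫))
      ((2 * lam) • innerSL ℝ v + (2 * ⟪W, v⟫) • innerSL ℝ W) y := by
    have h := (((innerSL ℝ v).hasFDerivAt (x := y)).const_mul (2 * lam)).add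
      ((((innerSL ℝ W).hasFDerivAt (x := y)).mul_const ⟪W, v⟫).const_mul 2)
    simp only [Pi.add_def, Pi.mul_def, innerSL_apply_apply] at h
    refine h.congr_fderiv ?_
    ext u
    simp
    ring
  have hG := hA.mul ((hinv.mul hp2).sub_const ⟪W, v⟫)
  simp only [Pi.mul_def] at hG
  -- the orthogonality condition
  rw [(stmt5_Eder W y lam hlamne hsy).fderiv] at hv
  simp only [ContinuousLinearMap.smul_apply, ContinuousLinearMap.add_apply,
    ContinuousLinearMap.sub_apply, ContinuousLinearMap.coe_smul', Pi.smul_apply,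
    innerSL_apply_apply, smul_eq_mul, one_div] at hv
  rw [real_inner_comm v y, hkey0] at hv
  rw [hG.fderiv]
  simp only [ContinuousLinearMap.smul_apply, ContinuousLinearMap.add_apply,
    ContinuousLinearMap.sub_apply, ContinuousLinearMap.coe_smul', Pi.smul_apply,
    ContinuousLinearMap.neg_apply, innerSL_apply_apply, smul_eq_mul, one_div]
  rw [real_inner_comm v y, hkey0]
  have hαy : lam * α y = Real.sqrt (lam * ⟪y, y⟫ + ⟪W, y⟫ ^ 2) := by
    rw [hα y, Real.sqrt_div hsy0, Real.sqrt_sq hlam0.le]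
    field_simp
  rw [hαy]
  set R := Real.sqrt (lam * ⟪y, y⟫ + ⟪W, y⟫ ^ 2) with hRdef
  have h2R : (2 * R) ≠ 0 := by
    have : 0 < 2 * R := by linarith
    exact ne_of_gt this
  have hX : (2 * R)⁻¹ * (2 * lam * ⟪v, y⟫ + 2 * ⟪W, y⟫ * ⟪W, v⟫) - ⟪W, v⟫ = 0 := by
    have hne : lam * lam⁻¹ * lam⁻¹ ≠ 0 := by
      field_simp
      exact one_div_ne_zero hlamne
    exact (mul_eq_zero.1 hv).resolve_left hne
  have hS : 2 * lam * ⟪v, y⟫ + 2 * ⟪W, y⟫ * ⟪W, v⟫ = 2 * R * ⟪W, v⟫ := by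
    have h1 : (2 * R) * ((2 * R)⁻¹ * (2 * lam * ⟪v, y⟫ + 2 * ⟪W, y⟫ * ⟪W, v⟫) - ⟪W, v⟫)
        = 0 := by rw [hX]; ring
    rw [mul_sub, ← mul_assoc, mul_inv_cancel₀ h2R, one_mul] at h1
    linarith
  have hS2 : 2 * lam * ⟪v, y⟫ + 2 * (⟪W, y⟫ * ⟪W, v⟫) = 2 * R * ⟪W, v⟫ := by
    linear_combination hS
  rw [hS, hS2]
  have hRne' : R ≠ 0 := hRne
  field_simp
  ring
end
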